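/- The sum of an affine mesh is a medial quandle: it is idempotent, left distributive, a left quasigroup, and satisfies (x*y)*(u*v) = (x*u)*(y*v) for all elements x,y,u,v. -/

import Mathlib

/-- The set of left translations of a binary algebra `(Q, op)`, viewed as permutations:
permutations `f` such that `f x = op a x` for some `a`. -/
def translations {Q : Type*} (op : Q → Q → Q) : Set (Equiv.Perm Q) :=
  { f | ∃ a : Q, ∀ x : Q, f x = op a x }

/-- The (left) multiplication group `LMlt(Q)`: the subgroup of the symmetric group
generated by the left translations. -/
def LMlt {Q : Type*} (op : Q → Q → Q) : Subgroup (Equiv.Perm Q) :=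
  Subgroup.closure (translations op)

/-- The displacement group `Dis(Q)`: the subgroup generated by all `L_a * L_b⁻¹`. -/
def Dis {Q : Type*} (op : Q → Q → Q) : Subgroup (Equiv.Perm Q) :=
  Subgroup.closure { f | ∃ g ∈ translations op, ∃ h ∈ translations op, f = g * h⁻¹ }

/-- `(Q, op)` is a quandle: idempotent, left distributive, left quasigroup. -/
def IsQuandle {Q : Type*} (op : Q → Q → Q) : Prop :=
  (∀ x, op x x = x) ∧
  (∀ x y z, op x (op y z) = op (op x y) (op x z)) ∧
  (∀ x y, ∃! u, op x u = y)

/-- `(Q, op)` is medial. -/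
def IsMedial {Q : Type*} (op : Q → Q → Q) : Prop :=
  ∀ x y u v, op (op x y) (op u v) = op (op x u) (op y v)

/-- The orbit of `e` under the multiplication group. -/
def qOrbit {Q : Type*} (op : Q → Q → Q) (e : Q) : Set Q :=
  { y | ∃ f ∈ LMlt op, f e = y }

/-- The orbit of `e` under the displacement group. -/
def disOrbit {Q : Type*} (op : Q → Q → Q) (e : Q) : Set Q :=
  { y | ∃ f ∈ Dis op, f e = y }

/-- An affine mesh over an index set `I`: abelian groups `A i`, homomorphisms
`φ i j : A i →+ A j`, and constants `c i j ∈ A j`, satisfying (M1)–(M4). -/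
structure AffineMesh (I : Type*) (A : I → Type*) [∀ i, AddCommGroup (A i)] where
  φ : ∀ i j : I, A i →+ A j
  c : ∀ i j : I, A j
  m1 : ∀ i : I, Function.Bijective fun x : A i => x - φ i i x
  m2 : ∀ i : I, c i i = 0
  m3 : ∀ i j j' k : I, (φ j k).comp (φ i j) = (φ j' k).comp (φ i j')
  m4 : ∀ i j k : I, φ j k (c i j) = φ k k (c i k - c j k)

/-- The sum of an affine mesh: the binary operation on the disjoint union of the fibres,
`a * b = c i j + φ i j a + (1 - φ j j) b` for `a ∈ A i`, `b ∈ A j`. -/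
def AffineMesh.sum {I : Type*} {A : I → Type*} [∀ i, AddCommGroup (A i)]
    (M : AffineMesh I A) (x y : Σ i, A i) : Σ i, A i :=
  ⟨y.1, M.c x.1 y.1 + M.φ x.1 y.1 x.2 + (y.2 - M.φ y.1 y.1 y.2)⟩

/-- An affine mesh is indecomposable if every fibre `A j` is generated by the
sets `c i j + Im (φ i j)`, `i ∈ I`. -/
def AffineMesh.Indecomposable {I : Type*} {A : I → Type*} [∀ i, AddCommGroup (A i)]
    (M : AffineMesh I A) : Prop :=
  ∀ j : I, AddSubgroup.closure (⋃ i : I, Set.range fun a : A i => M.c i j + M.φ i j a) = ⊤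


section Aux

variable {I : Type*} {A : I → Type*} [∀ i, AddCommGroup (A i)] (M : AffineMesh I A)

lemma AffineMesh.m3' (i j k : I) (a : A i) :
    M.φ j k (M.φ i j a) = M.φ k k (M.φ i k a) :=
  DFunLike.congr_fun (M.m3 i j k k) a

lemma AffineMesh.m4' (i j k : I) :
    M.φ j k (M.c i j) = M.φ k k (M.c i k) - M.φ k k (M.c j k) := by
  rw [M.m4 i j k, map_sub]

lemma AffineMesh.sum_idem (x : Σ i, A i) : M.sum x x = x := by
  obtain ⟨i, a⟩ := x
  show (⟨i, _⟩ : Σ i, A i) = ⟨i, a⟩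
  simp [AffineMesh.sum, M.m2]

lemma AffineMesh.sum_medial : IsMedial M.sum := by
  rintro ⟨i, a⟩ ⟨j, b⟩ ⟨k, u⟩ ⟨l, v⟩
  show (⟨l, _⟩ : Σ i, A i) = ⟨l, _⟩
  congr 1
  show M.c j l + M.φ j l (M.c i j + M.φ i j a + (b - M.φ j j b)) + (M.c k l + M.φ k l u + (v - M.φ l l v) - M.φ l l (M.c k l + M.φ k l u + (v - M.φ l l v))) = M.c k l + M.φ k l (M.c i k + M.φ i k a + (u - M.φ k k u)) + (M.c j l + M.φ j l b + (v - M.φ l l v) - M.φ l l (M.c j l + M.φ j l b + (v - M.φ l l v)))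
  simp only [AffineMesh.sum, map_add, map_sub]
  rw [M.m4' i j l, M.m4' i k l, M.m4' k l l, M.m4' j l l,
    M.m3' i j l, M.m3' k l l, M.m3' i k l, M.m3' j l l, M.m3' j j l, M.m3' k k l]
  simp only [M.m2, map_zero]
  abel

end Aux

/-- Lemma 3.6: the sum of an affine mesh is a medial quandle. -/
theorem mesh_sum_is_medial_quandle {I : Type*} [Nonempty I] {A : I → Type*}
    [∀ i, AddCommGroup (A i)] (M : AffineMesh I A) :
    IsQuandle M.sum ∧ IsMedial M.sum := by
  have hmed := M.sum_medial
  have hidem := M.sum_idem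
  refine ⟨⟨hidem, ?_, ?_⟩, hmed⟩
  · intro x y z
    calc M.sum x (M.sum y z) = M.sum (M.sum x x) (M.sum y z) := by rw [hidem]
      _ = M.sum (M.sum x y) (M.sum x z) := hmed x x y z
  · rintro ⟨i, a⟩ ⟨j, b⟩
    set e : A j ≃ A j := Equiv.ofBijective _ (M.m1 j) with he
    have heval : ∀ z : A j, e z = z - M.φ j j z := fun z => rfl
    refine ⟨⟨j, e.symm (b - M.c i j - M.φ i j a)⟩, ?_, ?_⟩
    · show (⟨j, _⟩ : Σ i, A i) = ⟨j, b⟩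
      congr 1
      show M.c i j + M.φ i j a + (e.symm _ - M.φ j j (e.symm _)) = b
      rw [← heval, e.apply_symm_apply]
      abel
    · rintro ⟨k, u⟩ hu
      have hk : k = j := congrArg Sigma.fst hu
      subst hk
      have h2 : M.c i k + M.φ i k a + (u - M.φ k k u) = b := by
        simpa [AffineMesh.sum] using hu
      congr 1
      apply e.injective
      rw [e.apply_symm_apply, heval]
      rw [← h2]
      abel
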